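/- Let n be a prime and c ∈ F_n with c ∉ {0, 1, −1, −2}. For every a ∈ F_n^*, the two columns of the matrix F_{n,c} indexed by the triples (a, −(c+1)a, a) and (−(c+1)a, a, a) are equal. Consequently, rank(F_{n,c}) ≤ n² − n. -/

import Mathlib

/-- The matrix `F_{n,c}`: rows are indexed by pairs `(u,v) ∈ F_n² ∖ {(0,0)}`, columns
by pairs `(x,y) ∈ F_n² ∖ {(0,0)}` (representing the triple `(x, y, z)` with
`z = -(x+y)/c`); the entry is `1` iff `(u,v) ∈ {(x,y), (y,z), (z,x)}`. -/
def Fmat (n : ℕ) [Fact n.Prime] (c : ZMod n) :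
    Matrix {p : ZMod n × ZMod n // p ≠ 0} {p : ZMod n × ZMod n // p ≠ 0} ℚ :=
  Matrix.of fun uv xy =>
    if uv.1 = (xy.1.1, xy.1.2) ∨ uv.1 = (xy.1.2, -(xy.1.1 + xy.1.2) / c) ∨
        uv.1 = (-(xy.1.1 + xy.1.2) / c, xy.1.1)
    then 1 else 0

open Matrix

/-- For a prime `n` and `c ∈ F_n ∖ {0, 1, -1, -2}`, for every
`a ∈ F_n^*` the two columns of `F_{n,c}` indexed by the triples `(a, -(c+1)a, a)`
and `(-(c+1)a, a, a)` (i.e. by the pairs `(a, -(c+1)a)` and `(-(c+1)a, a)`) are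
equal; consequently `rank(F_{n,c}) ≤ n² - n`. -/
theorem Fmat_repeated_columns_and_rank (n : ℕ) [Fact n.Prime] (c : ZMod n)
    (hc0 : c ≠ 0) (hc1 : c ≠ 1) (hcm1 : c ≠ -1) (hcm2 : c ≠ -2) :
    (∀ a : ZMod n, ∀ ha : a ≠ 0, ∀ row,
      Fmat n c row ⟨(a, -(c + 1) * a), fun h => ha (congrArg Prod.fst h)⟩
        = Fmat n c row ⟨(-(c + 1) * a, a), fun h => ha (congrArg Prod.snd h)⟩) ∧
    (Fmat n c).rank ≤ n ^ 2 - n := by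
  classical
  have hz1 : ∀ a : ZMod n, -(a + -(c + 1) * a) / c = a := by
    intro a; field_simp; ring
  have hz2 : ∀ a : ZMod n, -(-(c + 1) * a + a) / c = a := by
    intro a; field_simp; ring
  have hcols : ∀ a : ZMod n, ∀ ha : a ≠ 0, ∀ row,
      Fmat n c row ⟨(a, -(c + 1) * a), fun h => ha (congrArg Prod.fst h)⟩
        = Fmat n c row ⟨(-(c + 1) * a, a), fun h => ha (congrArg Prod.snd h)⟩ := by
    intro a ha row
    simp only [Fmat, Matrix.of_apply, hz1, hz2]
    exact if_congr (by tauto) rfl rfl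
  refine ⟨hcols, ?_⟩
  have hsq : (c + 1) * (c + 1) ≠ 1 := by
    intro h
    have h0 : (c - (-2)) * (c - 0) = 0 := by linear_combination h
    rcases mul_eq_zero.mp h0 with h' | h'
    · exact hcm2 (sub_eq_zero.mp h')
    · exact hc0 (sub_eq_zero.mp (by simpa using h'))
  set A := Fmat n c with hA
  set bad : {p : ZMod n × ZMod n // p ≠ 0} → Prop :=
    fun j => j.1.2 ≠ 0 ∧ j.1.1 = -(c + 1) * j.1.2 with hbad
  set s : Finset {p : ZMod n × ZMod n // p ≠ 0} :=
    Finset.univ.filter (fun j => ¬ bad j) with hs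
  have hspan : Set.range Aᵀ ⊆ (Submodule.span ℚ (Aᵀ '' ↑s) : Set _) := by
    rintro _ ⟨j, rfl⟩
    by_cases hj : bad j
    · obtain ⟨ha, hEq⟩ := hj
      set a := j.1.2 with ha'
      have hj' : j = ⟨(-(c + 1) * a, a), fun h => ha (congrArg Prod.snd h)⟩ := by
        apply Subtype.ext
        exact Prod.ext hEq rfl
      have hcol : Aᵀ j = Aᵀ ⟨(a, -(c + 1) * a), fun h => ha (congrArg Prod.fst h)⟩ := by
        rw [hj']
        funext row
        exact (hcols a ha row).symm
      rw [hcol]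
      apply Submodule.subset_span
      refine ⟨_, ?_, rfl⟩
      simp only [hs, Finset.coe_filter, Set.mem_setOf_eq, Finset.mem_univ, true_and]
      rintro ⟨-, h2⟩
      simp only at h2
      have h3 : ((c + 1) * (c + 1) - 1) * a = 0 := by linear_combination -h2
      rcases mul_eq_zero.mp h3 with h' | h'
      · exact hsq (by linear_combination h')
      · exact ha h'
    · apply Submodule.subset_span
      refine ⟨j, ?_, rfl⟩
      simp [hs, hj]
  have hle : Submodule.span ℚ (Set.range Aᵀ) ≤ Submodule.span ℚ (Aᵀ '' ↑s) :=
    Submodule.span_le.mpr hspan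
  have hrank : A.rank ≤ s.card := by
    rw [Matrix.rank_eq_finrank_span_cols]
    calc Module.finrank ℚ (Submodule.span ℚ (Set.range Aᵀ))
        ≤ Module.finrank ℚ (Submodule.span ℚ (Aᵀ '' ↑s)) := Submodule.finrank_mono hle
      _ ≤ (s.image Aᵀ).card := by
          have e : (Aᵀ '' ↑s) = ((s.image Aᵀ : Finset _) : Set _) := (Finset.coe_image).symm
          rw [e]
          exact finrank_span_finset_le_card _
      _ ≤ s.card := Finset.card_image_le
  have hcardT : (Finset.univ.filter bad).card = n - 1 := by
    rw [show n - 1 = ((Finset.univ : Finset (ZMod n)).erase 0).card by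
      rw [Finset.card_erase_of_mem (Finset.mem_univ _), Finset.card_univ, ZMod.card]]
    apply Finset.card_bij (fun j _ => j.1.2)
    · intro j hj
      simp only [Finset.mem_filter, Finset.mem_univ, true_and, hbad] at hj
      simp [hj.1]
    · intro j1 h1 j2 h2 hEq
      simp only [Finset.mem_filter, Finset.mem_univ, true_and, hbad] at h1 h2
      apply Subtype.ext; apply Prod.ext
      · rw [h1.2, h2.2, hEq]
      · exact hEq
    · intro b hb
      simp only [Finset.mem_erase, Finset.mem_univ, and_true] at hb
      refine ⟨⟨(-(c + 1) * b, b), fun h => hb (congrArg Prod.snd h)⟩, ?_, rfl⟩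
      simp [hbad, hb]
  have hcardU : Fintype.card {p : ZMod n × ZMod n // p ≠ 0} = n * n - 1 := by
    rw [Fintype.card_subtype_compl]
    simp [Fintype.card_subtype_eq, ZMod.card]
  have hn : 2 ≤ n := Nat.Prime.two_le Fact.out
  have h1 : (Finset.univ.filter bad).card + s.card
      = Fintype.card {p : ZMod n × ZMod n // p ≠ 0} := by
    rw [← Finset.card_univ]
    exact Finset.card_filter_add_card_filter_not _
  rw [hcardT, hcardU] at h1
  refine hrank.trans ?_
  rw [pow_two]
  have hnn : n ≤ n * n := Nat.le_mul_of_pos_left n (by omega)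
  omega
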